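/- Let A = (Q, Σ, δ, ρ) be an invertible reversible Mealy automaton and let u ∈ Q⁺ be a nonempty word, say of length m. Then the following are equivalent: (i) the action ρ_u : Σ* → Σ* induced by u has finite order, i.e., there exist p < q with ρ_u^p = ρ_u^q; (ii) the sizes of the connected components of the words uⁿ (n ∈ ℕ) are bounded, i.e., there exists N such that for every n ≥ 1 the connected component of uⁿ in A^{nm} has cardinality at most N. -/
import Mathlib


/-!
Mealy automata: common definitions.

A Mealy automaton on stateset `Q` and alphabet `Γ` is given by transition
functions `δ : Γ → Q → Q` (for each input letter) and output functions
`ρ : Q → Γ → Γ` (for each state); it has a transition `x —i|j→ y` exactly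
when `δ i x = y` and `ρ x i = j`.
-/

/-- Extended output function `ρ_x : Γ* → Γ*` of a single state. -/
def rhoStar {Q Γ : Type*} (δ : Γ → Q → Q) (ρ : Q → Γ → Γ) : Q → List Γ → List Γ
  | _, [] => []
  | x, i :: s => ρ x i :: rhoStar δ ρ (δ i x) s

/-- `ρ_u : Γ* → Γ*` for a word `u = x₁⋯x_n` of states: `ρ_u = ρ_{x_n} ∘ ⋯ ∘ ρ_{x₁}`. -/
def rhoWord {Q Γ : Type*} (δ : Γ → Q → Q) (ρ : Q → Γ → Γ) : List Q → List Γ → List Γ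
  | [], s => s
  | x :: u, s => rhoWord δ ρ u (rhoStar δ ρ x s)

/-- `ρ_u : Γ → Γ` on single letters (the output function of the power automaton). -/
def rhoLetter {Q Γ : Type*} (ρ : Q → Γ → Γ) : List Q → Γ → Γ
  | [], i => i
  | x :: u, i => rhoLetter ρ u (ρ x i)

/-- Extended transition function `δ_i : Q* → Q*` (the transition function of powers). -/
def deltaStar {Q Γ : Type*} (δ : Γ → Q → Q) (ρ : Q → Γ → Γ) : Γ → List Q → List Q
  | _, [] => []
  | i, x :: u => δ i x :: deltaStar δ ρ (ρ x i) u

/-- Sequential application `δ_s = δ_{s_n} ∘ ⋯ ∘ δ_{s₁}` of the letters of a word `s`. -/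
def applyWord {S Γ : Type*} (d : Γ → S → S) : List Γ → S → S
  | [], x => x
  | i :: s, x => applyWord d s (d i x)

/-- The orbit `{δ_s(x) : s ∈ Γ*}` of a state: for reversible automata this is
exactly the (strongly) connected component of `x`. -/
def orbitOf {S Γ : Type*} (d : Γ → S → S) (x : S) : Set S :=
  {y | ∃ s : List Γ, applyWord d s x = y}

/-- An automaton is invertible when every output function is a permutation. -/
def MInvertible {Q Γ : Type*} (ρ : Q → Γ → Γ) : Prop := ∀ x, Function.Bijective (ρ x)

/-- An automaton is reversible when every transition function is a permutation. -/
def MReversible {Q Γ : Type*} (δ : Γ → Q → Q) : Prop := ∀ i, Function.Bijective (δ i)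

/-- Coreversibility: `δ_i(y) = δ_{i'}(z)` and `ρ_y(i) = ρ_z(i')` imply `y = z`. -/
def MCoreversible {Q Γ : Type*} (δ : Γ → Q → Q) (ρ : Q → Γ → Γ) : Prop :=
  ∀ y z : Q, ∀ i i' : Γ, δ i y = δ i' z → ρ y i = ρ z i' → y = z

/-- Bireversible: invertible, reversible and coreversible. -/
def MBireversible {Q Γ : Type*} (δ : Γ → Q → Q) (ρ : Q → Γ → Γ) : Prop :=
  MInvertible ρ ∧ MReversible δ ∧ MCoreversible δ ρ

/-- Connectedness: every state is reachable from every state. -/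
def MConnected {Q Γ : Type*} (δ : Γ → Q → Q) : Prop :=
  ∀ x y : Q, ∃ s : List Γ, applyWord δ s x = y

/-- Invertibility of a component `C` (as an automaton with stateset `C`). -/
def CompInvertible {S Γ : Type*} (r : S → Γ → Γ) (C : Set S) : Prop :=
  ∀ x ∈ C, Function.Bijective (r x)

/-- Reversibility of a component `C`: each transition function permutes `C`. -/
def CompReversible {S Γ : Type*} (d : Γ → S → S) (C : Set S) : Prop :=
  ∀ i : Γ, Set.BijOn (d i) C C

/-- Coreversibility of a component `C` (as an automaton with stateset `C`). -/
def CompCoreversible {S Γ : Type*} (d : Γ → S → S) (r : S → Γ → Γ) (C : Set S) : Prop :=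
  ∀ y ∈ C, ∀ z ∈ C, ∀ i i' : Γ, d i y = d i' z → r y i = r z i' → y = z

/-- Bireversibility of a component `C` (as an automaton with stateset `C`). -/
def CompBireversible {S Γ : Type*} (d : Γ → S → S) (r : S → Γ → Γ) (C : Set S) : Prop :=
  CompInvertible r C ∧ CompReversible d C ∧ CompCoreversible d r C

/-- Transition functions of the product `A × B` of two Mealy automata. -/
def prodD {Q Q' Γ : Type*} (δ : Γ → Q → Q) (ρ : Q → Γ → Γ) (δ' : Γ → Q' → Q') :
    Γ → Q × Q' → Q × Q' :=
  fun i p => (δ i p.1, δ' (ρ p.1 i) p.2)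

/-- Output functions of the product `A × B` of two Mealy automata. -/
def prodR {Q Q' Γ : Type*} (ρ : Q → Γ → Γ) (ρ' : Q' → Γ → Γ) : Q × Q' → Γ → Γ :=
  fun p i => ρ' p.2 (ρ p.1 i)

/-- `u^n`: the `n`-fold concatenation of a word with itself. -/
def wordPow {Q : Type*} (u : List Q) : ℕ → List Q
  | 0 => []
  | n + 1 => u ++ wordPow u n

section Aux

variable {Q Γ : Type*} (δ : Γ → Q → Q) (ρ : Q → Γ → Γ)

/-- key cross identity -/
lemma rhoWord_cons (w : List Q) (i : Γ) (s : List Γ) :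
    rhoWord δ ρ w (i :: s) = rhoLetter ρ w i :: rhoWord δ ρ (deltaStar δ ρ i w) s := by
  induction w generalizing i s with
  | nil => rfl
  | cons x w ih => simp [rhoWord, rhoStar, rhoLetter, deltaStar, ih]

lemma rhoWord_nil (w : List Q) : rhoWord δ ρ w [] = [] := by
  induction w with
  | nil => rfl
  | cons x w ih => simpa [rhoWord, rhoStar] using ih

lemma rhoWord_append (a b : List Q) (s : List Γ) :
    rhoWord δ ρ (a ++ b) s = rhoWord δ ρ b (rhoWord δ ρ a s) := by
  induction a generalizing s with
  | nil => rfl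
  | cons x a ih => simp [rhoWord, ih]

lemma wordPow_length (u : List Q) (n : ℕ) : (wordPow u n).length = n * u.length := by
  induction n with
  | zero => simp [wordPow]
  | succ n ih => simp [wordPow, ih, Nat.succ_mul, Nat.add_comm]

lemma wordPow_add (u : List Q) (a b : ℕ) :
    wordPow u (a + b) = wordPow u a ++ wordPow u b := by
  induction a with
  | zero => simp [wordPow]
  | succ a ih => simp [wordPow, Nat.succ_add, ih]

lemma rhoWord_wordPow (u : List Q) (n : ℕ) :
    rhoWord δ ρ (wordPow u n) = (rhoWord δ ρ u)^[n] := by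
  induction n with
  | zero => rfl
  | succ n ih =>
    funext s
    show rhoWord δ ρ (u ++ wordPow u n) s = _
    rw [rhoWord_append, ih, Function.iterate_succ_apply]

lemma deltaStar_length (i : Γ) (w : List Q) :
    (deltaStar δ ρ i w).length = w.length := by
  induction w generalizing i with
  | nil => rfl
  | cons x w ih => simp [deltaStar, ih]

lemma deltaStar_append (i : Γ) (a b : List Q) :
    deltaStar δ ρ i (a ++ b) = deltaStar δ ρ i a ++ deltaStar δ ρ (rhoLetter ρ a i) b := by
  induction a generalizing i with
  | nil => rfl
  | cons x a ih => simp [deltaStar, rhoLetter, ih]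

lemma applyWord_length (s : List Γ) (w : List Q) :
    (applyWord (deltaStar δ ρ) s w).length = w.length := by
  induction s generalizing w with
  | nil => rfl
  | cons i s ih => simp [applyWord, ih, deltaStar_length]

lemma applyWord_append {S : Type*} (d : Γ → S → S) (s t : List Γ) (x : S) :
    applyWord d (s ++ t) x = applyWord d t (applyWord d s x) := by
  induction s generalizing x with
  | nil => rfl
  | cons i s ih => simp [applyWord, ih]

lemma mem_orbit_self {S : Type*} (d : Γ → S → S) (x : S) : x ∈ orbitOf d x := ⟨[], rfl⟩

lemma orbit_closed {S : Type*} (d : Γ → S → S) {x y : S} (h : y ∈ orbitOf d x) (i : Γ) :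
    d i y ∈ orbitOf d x := by
  obtain ⟨s, rfl⟩ := h
  exact ⟨s ++ [i], by rw [applyWord_append]; rfl⟩

lemma applyWord_prefix (s : List Γ) (a b : List Q) :
    ∃ b', applyWord (deltaStar δ ρ) s (a ++ b) =
      applyWord (deltaStar δ ρ) s a ++ b' := by
  induction s generalizing a b with
  | nil => exact ⟨b, rfl⟩
  | cons i s ih =>
    obtain ⟨b', hb'⟩ := ih (deltaStar δ ρ i a) (deltaStar δ ρ (rhoLetter ρ a i) b)
    exact ⟨b', by simp [applyWord, deltaStar_append, hb']⟩

lemma take_applyWord (s : List Γ) (a b : List Q) :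
    (applyWord (deltaStar δ ρ) s (a ++ b)).take a.length
      = applyWord (deltaStar δ ρ) s a := by
  obtain ⟨b', hb'⟩ := applyWord_prefix δ ρ s a b
  rw [hb', List.take_left' (applyWord_length δ ρ s a)]

lemma take_deltaStar (i : Γ) (w : List Q) {L : ℕ} (hL : L ≤ w.length) :
    (deltaStar δ ρ i w).take L = deltaStar δ ρ i (w.take L) := by
  conv_lhs => rw [← List.take_append_drop L w]
  rw [deltaStar_append, List.take_left']
  rw [deltaStar_length, List.length_take]
  exact Nat.min_eq_left hL

lemma orbit_finite [Finite Q] (v : List Q) : (orbitOf (deltaStar δ ρ) v).Finite := by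
  apply Set.Finite.subset (List.finite_length_eq Q v.length)
  rintro w ⟨s, rfl⟩
  exact applyWord_length δ ρ s v

/-- behavior determined by out-function on prefixes -/
lemma behavior_lemma (L : ℕ) (v v' : List Q) (hL : L ≤ v.length) (hL' : L ≤ v'.length)
    (hout : ∀ w ∈ orbitOf (deltaStar δ ρ) v, ∀ w' ∈ orbitOf (deltaStar δ ρ) v',
      w.take L = w'.take L → rhoLetter ρ w = rhoLetter ρ w') :
    ∀ s : List Γ, ∀ w ∈ orbitOf (deltaStar δ ρ) v, ∀ w' ∈ orbitOf (deltaStar δ ρ) v',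
      w.take L = w'.take L → rhoWord δ ρ w s = rhoWord δ ρ w' s := by
  intro s
  induction s with
  | nil => intro w _ w' _ _; rw [rhoWord_nil, rhoWord_nil]
  | cons i s ih =>
    intro w hw w' hw' htake
    rw [rhoWord_cons, rhoWord_cons, hout w hw w' hw' htake]
    congr 1
    apply ih _ (orbit_closed _ hw i) _ (orbit_closed _ hw' i)
    have h1 : L ≤ w.length := by
      obtain ⟨s1, rfl⟩ := hw; rw [applyWord_length]; exact hL
    have h2 : L ≤ w'.length := by
      obtain ⟨s1, rfl⟩ := hw'; rw [applyWord_length]; exact hL'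
    rw [take_deltaStar δ ρ i w h1, take_deltaStar δ ρ i w' h2, htake]

end Aux

section Main

variable {Q Γ : Type*} (δ : Γ → Q → Q) (ρ : Q → Γ → Γ)

lemma rhoStar_injective (hInv : MInvertible ρ) (x : Q) :
    Function.Injective (rhoStar δ ρ x) := by
  suffices h : ∀ (s : List Γ) (x : Q) (t : List Γ),
      rhoStar δ ρ x s = rhoStar δ ρ x t → s = t from fun {s t} => h s x t
  intro s
  induction s with
  | nil =>
    intro x t h
    cases t with
    | nil => rfl
    | cons j t => simp [rhoStar] at h
  | cons i s ih =>
    intro x t h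
    cases t with
    | nil => simp [rhoStar] at h
    | cons j t =>
      simp only [rhoStar, List.cons.injEq] at h
      obtain ⟨h1, h2⟩ := h
      have hij : i = j := (hInv x).1 h1
      subst hij
      exact congrArg _ (ih _ _ h2)

lemma rhoWord_injective (hInv : MInvertible ρ) (w : List Q) :
    Function.Injective (rhoWord δ ρ w) := by
  induction w with
  | nil => intro s t h; exact h
  | cons x w ih =>
    intro s t h
    exact rhoStar_injective δ ρ hInv x (ih h)

lemma rhoWord_id_letter {w : List Q} (h : rhoWord δ ρ w = id) (i : Γ) :
    rhoLetter ρ w i = i := by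
  have := congrFun h [i]
  rw [rhoWord_cons] at this
  exact (List.cons.injEq _ _ _ _).mp this |>.1

lemma rhoWord_id_step {w : List Q} (h : rhoWord δ ρ w = id) (i : Γ) :
    rhoWord δ ρ (deltaStar δ ρ i w) = id := by
  funext s
  have := congrFun h (i :: s)
  rw [rhoWord_cons] at this
  exact (List.cons.injEq _ _ _ _).mp this |>.2

lemma rhoWord_id_orbit {v : List Q} (h : rhoWord δ ρ v = id) :
    ∀ w ∈ orbitOf (deltaStar δ ρ) v, rhoWord δ ρ w = id := by
  rintro w ⟨s, rfl⟩
  revert h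
  induction s generalizing v with
  | nil => exact fun h => h
  | cons i s ih => exact fun h => ih (rhoWord_id_step δ ρ h i)

lemma applyWord_split {v : List Q} (h : rhoWord δ ρ v = id) (s : List Γ) (t : List Q) :
    applyWord (deltaStar δ ρ) s (v ++ t)
      = applyWord (deltaStar δ ρ) s v ++ applyWord (deltaStar δ ρ) s t := by
  induction s generalizing v t with
  | nil => rfl
  | cons i s ih =>
    show applyWord _ s (deltaStar δ ρ i (v ++ t)) = _
    rw [deltaStar_append, rhoWord_id_letter δ ρ h i]
    exact ih (rhoWord_id_step δ ρ h i) _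

lemma applyWord_nil_state (s : List Γ) :
    applyWord (deltaStar δ ρ) s ([] : List Q) = [] := by
  induction s with
  | nil => rfl
  | cons i s ih => exact ih

lemma applyWord_wordPow {v : List Q} (h : rhoWord δ ρ v = id) (s : List Γ) (j : ℕ) :
    applyWord (deltaStar δ ρ) s (wordPow v j)
      = wordPow (applyWord (deltaStar δ ρ) s v) j := by
  induction j with
  | zero => exact applyWord_nil_state δ ρ s
  | succ j ih =>
    show applyWord _ s (v ++ wordPow v j) = _
    rw [applyWord_split δ ρ h, ih]
    rfl

lemma wordPow_mul (u : List Q) (k n : ℕ) :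
    wordPow (wordPow u k) n = wordPow u (k * n) := by
  induction n with
  | zero => simp [wordPow]
  | succ n ih =>
    show wordPow u k ++ wordPow (wordPow u k) n = _
    rw [ih, ← wordPow_add]
    congr 1
    ring

/-- prefix surjection card bound -/
lemma ncard_orbit_prefix_le [Finite Q] (a b : List Q) :
    (orbitOf (deltaStar δ ρ) a).ncard ≤ (orbitOf (deltaStar δ ρ) (a ++ b)).ncard := by
  have hsub : orbitOf (deltaStar δ ρ) a
      ⊆ (fun w => w.take a.length) '' orbitOf (deltaStar δ ρ) (a ++ b) := by
    rintro x ⟨s, rfl⟩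
    exact ⟨applyWord (deltaStar δ ρ) s (a ++ b), ⟨s, rfl⟩, take_applyWord δ ρ s a b⟩
  calc (orbitOf (deltaStar δ ρ) a).ncard
      ≤ ((fun w => w.take a.length) '' orbitOf (deltaStar δ ρ) (a ++ b)).ncard :=
        Set.ncard_le_ncard hsub ((orbit_finite δ ρ _).image _)
    _ ≤ (orbitOf (deltaStar δ ρ) (a ++ b)).ncard :=
        Set.ncard_image_le (orbit_finite δ ρ _)

end Main

/-- In an invertible reversible Mealy automaton, a nonempty
word `u` of length `m` induces an action of finite order (there are `p < q`
with `ρ_u^p = ρ_u^q`) if and only if the sizes of the connected components of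
the words `u^n` in `A^{nm}` are bounded. -/
theorem finite_order_iff_bounded_components_of_powers
    {Q Γ : Type*} [Fintype Q] [Fintype Γ] [Nonempty Q] [Nonempty Γ]
    (δ : Γ → Q → Q) (ρ : Q → Γ → Γ)
    (hInv : MInvertible ρ) (hRev : MReversible δ)
    (u : List Q) (hu : u ≠ []) (m : ℕ) (hm : u.length = m) :
    (∃ p q : ℕ, p < q ∧ (rhoWord δ ρ u)^[p] = (rhoWord δ ρ u)^[q]) ↔
      ∃ N : ℕ, ∀ n : ℕ, 1 ≤ n →
        (orbitOf (deltaStar δ ρ) (wordPow u n)).ncard ≤ N := by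
  classical
  constructor
  · rintro ⟨p, q, hpq, heq⟩
    have hinj := rhoWord_injective δ ρ hInv u
    have hk0 : 0 < q - p := Nat.sub_pos_of_lt hpq
    have hid : (rhoWord δ ρ u)^[q - p] = id := by
      funext s
      have h1 : (rhoWord δ ρ u)^[p] ((rhoWord δ ρ u)^[q - p] s)
          = (rhoWord δ ρ u)^[p] s := by
        rw [← Function.iterate_add_apply, Nat.add_sub_cancel' hpq.le]
        exact (congrFun heq s).symm
      exact hinj.iterate p h1
    have hvid : rhoWord δ ρ (wordPow u (q - p)) = id := by
      rw [rhoWord_wordPow, hid]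
    refine ⟨(orbitOf (deltaStar δ ρ) (wordPow u (q - p))).ncard, ?_⟩
    intro n hn
    have h2 : (orbitOf (deltaStar δ ρ) (wordPow u ((q - p) * n))).ncard
        ≤ (orbitOf (deltaStar δ ρ) (wordPow u (q - p))).ncard := by
      have hsub : orbitOf (deltaStar δ ρ) (wordPow u ((q - p) * n))
          ⊆ (fun w => wordPow w n) '' orbitOf (deltaStar δ ρ) (wordPow u (q - p)) := by
        rintro x ⟨s, rfl⟩
        refine ⟨applyWord (deltaStar δ ρ) s (wordPow u (q - p)), ⟨s, rfl⟩, ?_⟩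
        show wordPow (applyWord (deltaStar δ ρ) s (wordPow u (q - p))) n = _
        rw [← wordPow_mul u (q - p) n, applyWord_wordPow δ ρ hvid]
      calc (orbitOf (deltaStar δ ρ) (wordPow u ((q - p) * n))).ncard
          ≤ ((fun w => wordPow w n) ''
              orbitOf (deltaStar δ ρ) (wordPow u (q - p))).ncard :=
            Set.ncard_le_ncard hsub ((orbit_finite δ ρ _).image _)
        _ ≤ _ := Set.ncard_image_le (orbit_finite δ ρ _)
    have hle : n ≤ (q - p) * n := Nat.le_mul_of_pos_left n hk0
    have h1 : (orbitOf (deltaStar δ ρ) (wordPow u n)).ncard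
        ≤ (orbitOf (deltaStar δ ρ) (wordPow u ((q - p) * n))).ncard := by
      have hsp : wordPow u ((q - p) * n)
          = wordPow u n ++ wordPow u ((q - p) * n - n) := by
        rw [← wordPow_add]; congr 1; omega
      rw [hsp]
      exact ncard_orbit_prefix_le δ ρ _ _
    exact h1.trans h2
  · rintro ⟨N, hN⟩
    have hTne : (Set.range fun j : ℕ =>
        (orbitOf (deltaStar δ ρ) (wordPow u (j + 1))).ncard).Nonempty := ⟨_, 0, rfl⟩
    have hTb : BddAbove (Set.range fun j : ℕ =>
        (orbitOf (deltaStar δ ρ) (wordPow u (j + 1))).ncard) := by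
      refine ⟨N, ?_⟩
      rintro _ ⟨j, rfl⟩
      exact hN (j + 1) (by omega)
    obtain ⟨j0, hj0⟩ := Nat.sSup_mem hTne hTb
    set n0 := j0 + 1 with hn0
    have hmax : ∀ n, 1 ≤ n → (orbitOf (deltaStar δ ρ) (wordPow u n)).ncard
        ≤ (orbitOf (deltaStar δ ρ) (wordPow u n0)).ncard := by
      intro n hn
      have hmem : (orbitOf (deltaStar δ ρ) (wordPow u n)).ncard ∈
          Set.range fun j : ℕ =>
            (orbitOf (deltaStar δ ρ) (wordPow u (j + 1))).ncard := by
        refine ⟨n - 1, ?_⟩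
        show (orbitOf (deltaStar δ ρ) (wordPow u (n - 1 + 1))).ncard = _
        rw [Nat.sub_add_cancel hn]
      calc (orbitOf (deltaStar δ ρ) (wordPow u n)).ncard
          ≤ sSup (Set.range fun j : ℕ =>
              (orbitOf (deltaStar δ ρ) (wordPow u (j + 1))).ncard) := le_csSup hTb hmem
        _ = _ := hj0.symm
    set L := (wordPow u n0).length with hL
    have hsplit : ∀ n, n0 ≤ n →
        wordPow u n = wordPow u n0 ++ wordPow u (n - n0) := by
      intro n hn
      rw [← wordPow_add]; congr 1; omega
    have hmapsTo : ∀ n, n0 ≤ n → ∀ w ∈ orbitOf (deltaStar δ ρ) (wordPow u n),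
        w.take L ∈ orbitOf (deltaStar δ ρ) (wordPow u n0) := by
      intro n hn w hw
      obtain ⟨s, rfl⟩ := hw
      rw [hsplit n hn, hL, take_applyWord]
      exact ⟨s, rfl⟩
    have hsurj : ∀ n, n0 ≤ n → ∀ x ∈ orbitOf (deltaStar δ ρ) (wordPow u n0),
        ∃ w ∈ orbitOf (deltaStar δ ρ) (wordPow u n), w.take L = x := by
      intro n hn x hx
      obtain ⟨s, rfl⟩ := hx
      refine ⟨applyWord (deltaStar δ ρ) s (wordPow u n), ⟨s, rfl⟩, ?_⟩
      rw [hsplit n hn, hL]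
      exact take_applyWord δ ρ s _ _
    have hinjOn : ∀ n, n0 ≤ n →
        ∀ w ∈ orbitOf (deltaStar δ ρ) (wordPow u n),
        ∀ w' ∈ orbitOf (deltaStar δ ρ) (wordPow u n),
        w.take L = w'.take L → w = w' := by
      intro n hn w hw w' hw' hww'
      exact Set.inj_on_of_surj_on_of_ncard_le
        (s := orbitOf (deltaStar δ ρ) (wordPow u n))
        (t := orbitOf (deltaStar δ ρ) (wordPow u n0))
        (fun a _ => a.take L)
        (fun a ha => hmapsTo n hn a ha)
        (fun b hb => by
          obtain ⟨w2, hw2, hw2'⟩ := hsurj n hn b hb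
          exact ⟨w2, hw2, hw2'⟩)
        (hmax n (by omega)) hw hw' hww' (orbit_finite δ ρ _)
    have hPfin : (orbitOf (deltaStar δ ρ) (wordPow u n0)).Finite := orbit_finite δ ρ _
    haveI := hPfin.to_subtype
    set g : ℕ → ((orbitOf (deltaStar δ ρ) (wordPow u n0)) → Γ → Γ) := fun a p =>
      if h : ∃ w ∈ orbitOf (deltaStar δ ρ) (wordPow u (n0 + a)), w.take L = p.val
      then rhoLetter ρ h.choose else id with hg_def
    have hg : ∀ (a : ℕ) (w : List Q)
        (hw : w ∈ orbitOf (deltaStar δ ρ) (wordPow u (n0 + a)))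
        (hp : w.take L ∈ orbitOf (deltaStar δ ρ) (wordPow u n0)),
        g a ⟨w.take L, hp⟩ = rhoLetter ρ w := by
      intro a w hw hp
      have hex : ∃ w' ∈ orbitOf (deltaStar δ ρ) (wordPow u (n0 + a)),
          w'.take L = (⟨w.take L, hp⟩ :
            (orbitOf (deltaStar δ ρ) (wordPow u n0))).val := ⟨w, hw, rfl⟩
      rw [hg_def]
      simp only []
      rw [dif_pos hex]
      obtain ⟨hmem, htk⟩ := hex.choose_spec
      have heq2 : hex.choose = w := hinjOn (n0 + a) (by omega) _ hmem _ hw htk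
      rw [heq2]
    obtain ⟨a, b, hab, hgab⟩ := Finite.exists_ne_map_eq_of_infinite g
    have key : ∀ a b : ℕ, a < b → g a = g b →
        ∃ p q, p < q ∧ (rhoWord δ ρ u)^[p] = (rhoWord δ ρ u)^[q] := by
      intro a b hab' hg'
      refine ⟨n0 + a, n0 + b, by omega, ?_⟩
      rw [← rhoWord_wordPow, ← rhoWord_wordPow]
      funext s
      refine behavior_lemma δ ρ L (wordPow u (n0 + a)) (wordPow u (n0 + b))
        ?_ ?_ ?_ s _ (mem_orbit_self _ _) _ (mem_orbit_self _ _) ?_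
      · rw [hL, wordPow_length, wordPow_length]
        exact Nat.mul_le_mul_right _ (by omega)
      · rw [hL, wordPow_length, wordPow_length]
        exact Nat.mul_le_mul_right _ (by omega)
      · intro w hw w' hw' htk
        have hp := hmapsTo (n0 + a) (by omega) w hw
        have hp' := hmapsTo (n0 + b) (by omega) w' hw'
        have e1 := hg a w hw hp
        have e2 := hg b w' hw' hp'
        have hsame : (⟨w.take L, hp⟩ :
            (orbitOf (deltaStar δ ρ) (wordPow u n0)))
            = ⟨w'.take L, hp'⟩ := Subtype.ext htk
        rw [← e1, ← e2, hg', hsame]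
      · rw [hsplit (n0 + a) (by omega), hsplit (n0 + b) (by omega),
          List.take_left' hL.symm, List.take_left' hL.symm]
    rcases lt_or_gt_of_ne hab with h | h
    · exact key a b h hgab
    · exact key b a h hgab.symm
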